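/- arXiv:1606.03150 — 2 statements merged into one kernel-verified Lean document; each statement's English description precedes it below -/
import Mathlib

section
/- Let X ~ Gamma(m+1, λ) with m ∈ ℕ, λ > 0, and let θ > 0, η > 0 be constants. Define γ = X / (θ + ηX). Then for 0 ≤ s < 1/η, the CDF of γ satisfies P(γ < s) = 1 - exp(-θs·λ/(1-ηs)) · Σ_{i=0}^{m} (1/i!)(θsλ/(1-ηs))^i, and for s ≥ 1/η, P(γ < s) = 1. -/
open MeasureTheory ProbabilityTheory Real Filter

lemma hasDerivAt_aux (lam : ℝ) (m : ℕ) (x : ℝ) :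
    HasDerivAt (fun y => Real.exp (-(lam * y)) *
        ∑ i ∈ Finset.range (m + 1), (1 / (Nat.factorial i : ℝ)) * (lam * y) ^ i)
      (-(lam * (lam * x) ^ m / (Nat.factorial m : ℝ) * Real.exp (-(lam * x)))) x := by
  have hexp : HasDerivAt (fun y => Real.exp (-(lam * y))) (Real.exp (-(lam * x)) * -lam) x := by
    have := (((hasDerivAt_id x).const_mul lam).neg).exp
    simpa using this
  induction m with
  | zero =>
    have hfun : (fun y => Real.exp (-(lam * y)) *
        ∑ i ∈ Finset.range (0 + 1), (1 / (Nat.factorial i : ℝ)) * (lam * y) ^ i)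
        = fun y => Real.exp (-(lam * y)) := by
      funext y; simp
    rw [hfun]
    exact hexp.congr_deriv (by simp [Nat.factorial]; ring)
  | succ n ih =>
    have hpow : HasDerivAt (fun y => (lam * y) ^ (n + 1))
        (((n : ℝ) + 1) * (lam * x) ^ n * lam) x := by
      have h1 : HasDerivAt (fun y => lam * y) lam x := by
        simpa using (hasDerivAt_id x).const_mul lam
      have := (hasDerivAt_pow (n + 1) (lam * x)).comp x h1
      simpa [mul_comm, Function.comp_def] using this
    have h2 : HasDerivAt (fun y => Real.exp (-(lam * y)) *
        ((1 / (Nat.factorial (n + 1) : ℝ)) * (lam * y) ^ (n + 1)))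
        (Real.exp (-(lam * x)) * -lam * ((1 / (Nat.factorial (n + 1) : ℝ)) * (lam * x) ^ (n + 1))
          + Real.exp (-(lam * x)) * ((1 / (Nat.factorial (n + 1) : ℝ)) *
            (((n : ℝ) + 1) * (lam * x) ^ n * lam))) x :=
      hexp.mul (hpow.const_mul _)
    have h3 := ih.add h2
    have hfun : (fun y => Real.exp (-(lam * y)) *
        ∑ i ∈ Finset.range (n + 1 + 1), (1 / (Nat.factorial i : ℝ)) * (lam * y) ^ i)
        = fun y => (Real.exp (-(lam * y)) *
          ∑ i ∈ Finset.range (n + 1), (1 / (Nat.factorial i : ℝ)) * (lam * y) ^ i)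
          + Real.exp (-(lam * y)) *
            ((1 / (Nat.factorial (n + 1) : ℝ)) * (lam * y) ^ (n + 1)) := by
      funext y; rw [Finset.sum_range_succ, mul_add]
    rw [hfun]
    refine h3.congr_deriv ?_
    have hn : ((Nat.factorial n : ℝ)) ≠ 0 := Nat.cast_ne_zero.mpr (Nat.factorial_ne_zero n)
    have hn1 : ((Nat.factorial (n+1) : ℝ)) ≠ 0 := Nat.cast_ne_zero.mpr (Nat.factorial_ne_zero _)
    field_simp [Nat.factorial_succ]
    simp only [show 1 + n = n + 1 from add_comm 1 n, Nat.factorial_succ, Nat.cast_mul, Nat.cast_add,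
      Nat.cast_one]
    ring

lemma integral_aux (lam : ℝ) (m : ℕ) {c : ℝ} (hc : 0 ≤ c) :
    ∫ x in (0:ℝ)..c, lam ^ (m + 1) * x ^ m * Real.exp (-(lam * x)) / (Nat.factorial m : ℝ)
      = 1 - Real.exp (-(lam * c)) *
          ∑ i ∈ Finset.range (m + 1), (1 / (Nat.factorial i : ℝ)) * (lam * c) ^ i := by
  have hF : ∀ x ∈ Set.uIcc (0:ℝ) c, HasDerivAt
      (fun y => 1 - Real.exp (-(lam * y)) *
        ∑ i ∈ Finset.range (m + 1), (1 / (Nat.factorial i : ℝ)) * (lam * y) ^ i)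
      (lam ^ (m + 1) * x ^ m * Real.exp (-(lam * x)) / (Nat.factorial m : ℝ)) x := by
    intro x _
    refine ((hasDerivAt_aux lam m x).const_sub 1).congr_deriv ?_
    rw [mul_pow]; ring
  have hcont : Continuous (fun x : ℝ =>
      lam ^ (m + 1) * x ^ m * Real.exp (-(lam * x)) / (Nat.factorial m : ℝ)) := by
    fun_prop
  have := intervalIntegral.integral_eq_sub_of_hasDerivAt hF (hcont.intervalIntegrable 0 c)
  rw [this]
  have h0 : ∑ i ∈ Finset.range (m + 1), (1 / (Nat.factorial i : ℝ)) * (lam * 0) ^ i = 1 := by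
    rw [Finset.sum_range_succ']; simp
  rw [h0]
  simp

lemma lintegral_aux (m : ℕ) {lam c : ℝ} (hlam : 0 < lam) (hc : 0 ≤ c) :
    ∫⁻ x in Set.Ico 0 c, gammaPDF (m + 1) lam x
      = ENNReal.ofReal (1 - Real.exp (-(lam * c)) *
          ∑ i ∈ Finset.range (m + 1), (1 / (Nat.factorial i : ℝ)) * (lam * c) ^ i) := by
  have hpdf : ∀ x ∈ Set.Ico (0:ℝ) c, gammaPDF (m + 1) lam x
      = ENNReal.ofReal (lam ^ (m + 1) * x ^ m * Real.exp (-(lam * x)) / (Nat.factorial m : ℝ)) := by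
    intro x hx
    rw [gammaPDF_of_nonneg hx.1]
    congr 1
    have h1 : ((m : ℝ) + 1) = ((m + 1 : ℕ) : ℝ) := by push_cast; ring
    have h2 : ((m : ℝ) + 1 - 1) = ((m : ℕ) : ℝ) := by push_cast; ring
    rw [h2, Real.rpow_natCast, h1, Real.rpow_natCast, ← h1, Real.Gamma_nat_eq_factorial]
    ring
  rw [setLIntegral_congr_fun measurableSet_Ico hpdf]
  rw [← ofReal_integral_eq_lintegral_ofReal]
  · rw [MeasureTheory.integral_Ico_eq_integral_Ioo, ← MeasureTheory.integral_Ioc_eq_integral_Ioo,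
      ← intervalIntegral.integral_of_le hc, integral_aux lam m hc]
  · have hcont : Continuous (fun x : ℝ =>
        lam ^ (m + 1) * x ^ m * Real.exp (-(lam * x)) / (Nat.factorial m : ℝ)) := by fun_prop
    exact hcont.integrableOn_Icc.mono_set Set.Ico_subset_Icc_self
  · refine (ae_restrict_iff' measurableSet_Ico).mpr (ae_of_all _ fun x hx => ?_)
    have hx0 : (0:ℝ) ≤ x := hx.1
    have : (0:ℝ) < (Nat.factorial m : ℝ) := by positivity
    positivity

/-- CDF of γ = X/(θ+ηX) for X ~ Gamma(m+1, λ). -/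
theorem stmt_1 {Ω : Type*} [MeasurableSpace Ω] (P : Measure Ω) [IsProbabilityMeasure P]
    (m : ℕ) (lam : ℝ) (hlam : 0 < lam) (X : Ω → ℝ) (hXmeas : Measurable X)
    (hX : Measure.map X P = gammaMeasure (m + 1) lam)
    (θ η : ℝ) (hθ : 0 < θ) (hη : 0 < η) (s : ℝ) :
    (0 ≤ s → s < 1 / η →
      P {ω | X ω / (θ + η * X ω) < s} =
        ENNReal.ofReal
          (1 - Real.exp (-(θ * s * lam / (1 - η * s))) *
            ∑ i ∈ Finset.range (m + 1),
              (1 / (Nat.factorial i : ℝ)) * (θ * s * lam / (1 - η * s)) ^ i)) ∧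
    (1 / η ≤ s → P {ω | X ω / (θ + η * X ω) < s} = 1) := by
  set T : Set ℝ := {x | x / (θ + η * x) < s} with hT
  have hTmeas : MeasurableSet T := by
    have : Measurable fun x : ℝ => x / (θ + η * x) :=
      measurable_id.div (measurable_const.add (measurable_id.const_mul η))
    exact this measurableSet_Iio
  have hPT : P {ω | X ω / (θ + η * X ω) < s} = gammaMeasure (m + 1) lam T := by
    rw [← hX, Measure.map_apply hXmeas hTmeas]
    rfl
  haveI : IsProbabilityMeasure (gammaMeasure (m + 1) lam) :=
    isProbabilityMeasure_gammaMeasure (by positivity) hlam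
  have hIio0 : gammaMeasure (m + 1) lam (Set.Iio 0) = 0 := by
    rw [gammaMeasure, withDensity_apply _ measurableSet_Iio]
    exact lintegral_gammaPDF_of_nonpos le_rfl
  constructor
  · intro hs0 hslt
    have h1s : 0 < 1 - η * s := by
      have := (lt_div_iff₀ hη).mp hslt
      nlinarith
    set c : ℝ := θ * s / (1 - η * s) with hc_def
    have hc : 0 ≤ c := div_nonneg (by positivity) h1s.le
    have hTsplit : T ∩ Set.Ici 0 = Set.Ico 0 c := by
      ext x
      simp only [hT, Set.mem_inter_iff, Set.mem_setOf_eq, Set.mem_Ici, Set.mem_Ico]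
      constructor
      · rintro ⟨hlt, hx0⟩
        have hd : 0 < θ + η * x := by positivity
        have := (div_lt_iff₀ hd).mp hlt
        refine ⟨hx0, (lt_div_iff₀ h1s).mpr (by nlinarith)⟩
      · rintro ⟨hx0, hlt⟩
        have hd : 0 < θ + η * x := by positivity
        have := (lt_div_iff₀ h1s).mp hlt
        exact ⟨(div_lt_iff₀ hd).mpr (by nlinarith), hx0⟩
    have hmeq : gammaMeasure (m + 1) lam T = gammaMeasure (m + 1) lam (Set.Ico 0 c) := by
      refine le_antisymm ?_ ?_
      · have hTu : T = (T ∩ Set.Iio 0) ∪ (T ∩ Set.Ici 0) := by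
          rw [← Set.inter_union_distrib_left, Set.Iio_union_Ici, Set.inter_univ]
        calc gammaMeasure (m + 1) lam T
            ≤ gammaMeasure (m + 1) lam (T ∩ Set.Iio 0)
              + gammaMeasure (m + 1) lam (T ∩ Set.Ici 0) := by
              nth_rewrite 1 [hTu]; exact measure_union_le _ _
          _ = gammaMeasure (m + 1) lam (Set.Ico 0 c) := by
              rw [hTsplit]
              have : gammaMeasure (m + 1) lam (T ∩ Set.Iio 0) = 0 :=
                le_antisymm (le_trans (measure_mono Set.inter_subset_right) hIio0.le) (by positivity)
              rw [this, zero_add]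
      · refine measure_mono ?_
        rw [← hTsplit]
        exact Set.inter_subset_left
    rw [hPT, hmeq, gammaMeasure, withDensity_apply _ measurableSet_Ico, lintegral_aux m hlam hc]
    have hlc : lam * c = θ * s * lam / (1 - η * s) := by
      rw [hc_def]; field_simp
    rw [hlc]
  · intro hs
    have hsub : Set.Ici (0:ℝ) ⊆ T := by
      intro x hx0
      have hx0 : (0:ℝ) ≤ x := hx0
      have hd : 0 < θ + η * x := by positivity
      have h1 : x / (θ + η * x) < 1 / η := by
        rw [div_lt_div_iff₀ hd hη]
        nlinarith
      exact h1.trans_le hs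
    rw [hPT]
    refine le_antisymm prob_le_one ?_
    calc (1:ENNReal) = gammaMeasure (m + 1) lam Set.univ := (measure_univ).symm
      _ ≤ gammaMeasure (m + 1) lam (Set.Iio 0) + gammaMeasure (m + 1) lam (Set.Ici 0) := by
          rw [← Set.Iio_union_Ici]; exact measure_union_le _ _
      _ = gammaMeasure (m + 1) lam (Set.Ici 0) := by rw [hIio0, zero_add]
      _ ≤ gammaMeasure (m + 1) lam T := measure_mono hsub
end

section
/- For any a > 0 and nonnegative integer n, ∫_0^∞ ln(1 + a·x) · x^n · e^{-x} dx = n! · Σ_{μ=0}^{n} (1/(n-μ)!) · [ (-1)^{n-μ-1} a^{-(n-μ)} e^{1/a} Ei(-1/a) + Σ_{k=1}^{n-μ} (k-1)! · (-1/a)^{n-μ-k} ], where Ei(z) = -∫_{-z}^∞ e^{-t}/t dt is the exponential integral. -/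
open MeasureTheory Real Filter

/-- The exponential integral `Ei z = -∫_{-z}^∞ e^{-t}/t dt`. -/
noncomputable def expIntegralEi (z : ℝ) : ℝ := -∫ t in Set.Ioi (-z), Real.exp (-t) / t

namespace GR43375

open Set

/-- `∫_0^∞ x^m e^{-x} dx` is integrable. -/
lemma integrableOn_pow_exp (m : ℕ) :
    IntegrableOn (fun x : ℝ => x ^ m * Real.exp (-x)) (Ioi 0) := by
  have h := Real.GammaIntegral_convergent (s := (m : ℝ) + 1) (by positivity)
  refine h.congr_fun (fun x hx => ?_) measurableSet_Ioi
  rw [add_sub_cancel_right]; dsimp only; rw [Real.rpow_natCast, mul_comm]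

lemma integral_pow_exp (m : ℕ) :
    ∫ x in Ioi (0:ℝ), x ^ m * Real.exp (-x) = m.factorial := by
  have h := Real.Gamma_eq_integral (s := (m : ℝ) + 1) (by positivity)
  have h2 : Real.Gamma ((m : ℝ) + 1) = m.factorial := Real.Gamma_nat_eq_factorial m
  rw [h2] at h
  rw [show (∫ x in Ioi (0:ℝ), x ^ m * Real.exp (-x))
      = ∫ x in Ioi (0:ℝ), Real.exp (-x) * x ^ ((m : ℝ) + 1 - 1) from
    setIntegral_congr_fun measurableSet_Ioi (fun x hx => by
      rw [add_sub_cancel_right, Real.rpow_natCast, mul_comm]), ← h]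

variable {a : ℝ}

lemma integrableOn_K (ha : 0 < a) (m : ℕ) :
    IntegrableOn (fun x : ℝ => x ^ m * Real.exp (-x) / (1 + a * x)) (Ioi 0) := by
  refine Integrable.mono (integrableOn_pow_exp m) ?_ ?_
  · exact (((measurable_id.pow_const m).mul (Real.measurable_exp.comp measurable_neg)).div
      ((measurable_id.const_mul a).const_add 1)).aestronglyMeasurable
  · filter_upwards [ae_restrict_mem measurableSet_Ioi] with x hx
    have hx0 : (0:ℝ) < x := hx
    have h1 : (1:ℝ) ≤ 1 + a * x := by nlinarith
    have hpos : 0 ≤ x ^ m * Real.exp (-x) := by positivity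
    rw [Real.norm_eq_abs, Real.norm_eq_abs, abs_of_nonneg (by positivity),
      abs_of_nonneg hpos]
    exact div_le_self hpos h1

lemma integrableOn_I (ha : 0 < a) (m : ℕ) :
    IntegrableOn (fun x : ℝ => Real.log (1 + a * x) * x ^ m * Real.exp (-x)) (Ioi 0) := by
  refine Integrable.mono ((integrableOn_pow_exp (m + 1)).const_mul a) ?_ ?_
  · exact (((Real.measurable_log.comp ((measurable_id.const_mul a).const_add 1)).mul
      (measurable_id.pow_const m)).mul (Real.measurable_exp.comp measurable_neg)).aestronglyMeasurable
  · filter_upwards [ae_restrict_mem measurableSet_Ioi] with x hx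
    have hx0 : (0:ℝ) < x := hx
    have h1 : (0:ℝ) < 1 + a * x := by nlinarith
    have hlog0 : 0 ≤ Real.log (1 + a * x) :=
      Real.log_nonneg (by nlinarith)
    have hlog : Real.log (1 + a * x) ≤ a * x := by
      have := Real.log_le_sub_one_of_pos h1
      linarith
    rw [Real.norm_eq_abs, Real.norm_eq_abs, abs_of_nonneg (by positivity),
      abs_of_nonneg (by positivity)]
    calc Real.log (1 + a * x) * x ^ m * Real.exp (-x)
        ≤ (a * x) * x ^ m * Real.exp (-x) := by
          apply mul_le_mul_of_nonneg_right _ (Real.exp_nonneg _)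
          exact mul_le_mul_of_nonneg_right hlog (by positivity)
      _ = a * (x ^ (m + 1) * Real.exp (-x)) := by ring

/-- The constant `E = e^{1/a} ∫_{1/a}^∞ e^{-t}/t dt`. -/
noncomputable def Ee (a : ℝ) : ℝ :=
  Real.exp (1 / a) * ∫ t in Ioi (1 / a), Real.exp (-t) / t

lemma shift_integral (c : ℝ) (g : ℝ → ℝ) :
    ∫ x in Ioi (0:ℝ), g (x + c) = ∫ t in Ioi c, g t := by
  have h1 := (measurePreserving_add_right (volume : Measure ℝ) c).setIntegral_preimage_emb
    (MeasurableEquiv.addRight c).measurableEmbedding g (Ioi c)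
  simpa using h1

lemma K_zero (ha : 0 < a) :
    a * ∫ x in Ioi (0:ℝ), x ^ 0 * Real.exp (-x) / (1 + a * x) = Ee a := by
  have ha' : a ≠ 0 := ha.ne'
  have key : ∀ x ∈ Ioi (0:ℝ), x ^ 0 * Real.exp (-x) / (1 + a * x)
      = (Real.exp (1 / a) / a) * (Real.exp (-(x + 1 / a)) / (x + 1 / a)) := by
    intro x hx
    have hx0 : (0:ℝ) < x := hx
    have h1 : (1:ℝ) + a * x = a * (x + 1 / a) := by field_simp; ring
    have h2 : Real.exp (-x) = Real.exp (1 / a) * Real.exp (-(x + 1 / a)) := by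
      rw [← Real.exp_add]; ring_nf
    have h3 : x + 1 / a ≠ 0 := by positivity
    rw [pow_zero, one_mul, h1, h2]
    field_simp
  rw [setIntegral_congr_fun measurableSet_Ioi key, integral_const_mul,
    shift_integral (1 / a) (fun t => Real.exp (-t) / t), Ee]
  field_simp

lemma K_rec (ha : 0 < a) (m : ℕ) :
    a * ∫ x in Ioi (0:ℝ), x ^ (m + 1) * Real.exp (-x) / (1 + a * x)
      = (m.factorial : ℝ) - ∫ x in Ioi (0:ℝ), x ^ m * Real.exp (-x) / (1 + a * x) := by
  have key : ∀ x ∈ Ioi (0:ℝ), a * (x ^ (m + 1) * Real.exp (-x) / (1 + a * x))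
      = x ^ m * Real.exp (-x) - x ^ m * Real.exp (-x) / (1 + a * x) := by
    intro x hx
    have hx0 : (0:ℝ) < x := hx
    have h1 : (1:ℝ) + a * x ≠ 0 := by positivity
    field_simp
    ring
  rw [← integral_const_mul, setIntegral_congr_fun measurableSet_Ioi key,
    integral_sub (integrableOn_pow_exp m) (integrableOn_K ha m), integral_pow_exp m]

lemma IBP (ha : 0 < a) (n : ℕ) :
    ∫ x in Ioi (0:ℝ), Real.log (1 + a * x) * x ^ n * Real.exp (-x)
      = (n : ℝ) * (∫ x in Ioi (0:ℝ), Real.log (1 + a * x) * x ^ (n - 1) * Real.exp (-x))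
        + a * (∫ x in Ioi (0:ℝ), x ^ n * Real.exp (-x) / (1 + a * x)) := by
  set F : ℝ → ℝ := fun x => -(x ^ n * Real.log (1 + a * x) * Real.exp (-x)) with hF
  set f' : ℝ → ℝ := fun x => Real.log (1 + a * x) * x ^ n * Real.exp (-x)
    - ((n : ℝ) * (Real.log (1 + a * x) * x ^ (n - 1) * Real.exp (-x))
       + a * (x ^ n * Real.exp (-x) / (1 + a * x))) with hf'
  have hB : IntegrableOn
      (fun x : ℝ => (n : ℝ) * (Real.log (1 + a * x) * x ^ (n - 1) * Real.exp (-x))) (Ioi 0) :=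
    (integrableOn_I ha (n - 1)).const_mul _
  have hC : IntegrableOn
      (fun x : ℝ => a * (x ^ n * Real.exp (-x) / (1 + a * x))) (Ioi 0) :=
    (integrableOn_K ha n).const_mul _
  have hBC : IntegrableOn
      (fun x : ℝ => (n : ℝ) * (Real.log (1 + a * x) * x ^ (n - 1) * Real.exp (-x))
        + a * (x ^ n * Real.exp (-x) / (1 + a * x))) (Ioi 0) := hB.add hC
  have hint : IntegrableOn f' (Ioi 0) := (integrableOn_I ha n).sub hBC
  have hderiv : ∀ x ∈ Ioi (0:ℝ), HasDerivAt F (f' x) x := by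
    intro x hx
    have hx0 : (0:ℝ) < x := hx
    have h1 : (0:ℝ) < 1 + a * x := by nlinarith
    have d1 : HasDerivAt (fun x : ℝ => x ^ n) ((n : ℝ) * x ^ (n - 1)) x := hasDerivAt_pow n x
    have d2 : HasDerivAt (fun x : ℝ => Real.log (1 + a * x)) (a / (1 + a * x)) x := by
      have : HasDerivAt (fun x : ℝ => 1 + a * x) a x := by
        simpa using ((hasDerivAt_id x).const_mul a).const_add 1
      exact this.log h1.ne'
    have d3 : HasDerivAt (fun x : ℝ => Real.exp (-x)) (-Real.exp (-x)) x := by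
      simpa using ((hasDerivAt_id x).neg).exp
    have := ((d1.mul d2).mul d3).neg
    refine this.congr_deriv ?_
    simp only [hf', Pi.mul_apply]
    ring
  have hcont : ContinuousWithinAt F (Ici 0) 0 := by
    apply ContinuousAt.continuousWithinAt
    have h1 : ContinuousAt (fun x : ℝ => 1 + a * x) 0 := by fun_prop
    have h2 : ContinuousAt (fun x : ℝ => Real.log (1 + a * x)) 0 :=
      (Real.continuousAt_log (by norm_num)).comp h1
    exact (((continuousAt_pow _ _).mul h2).mul (by fun_prop)).neg
  have htend : Tendsto F atTop (nhds 0) := by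
    have hG : Tendsto (fun x : ℝ => x ^ n * Real.log (1 + a * x) * Real.exp (-x))
        atTop (nhds 0) := by
      have hub : Tendsto (fun x : ℝ => a * (x ^ (n + 1) * Real.exp (-x))) atTop (nhds 0) := by
        simpa using (tendsto_pow_mul_exp_neg_atTop_nhds_zero (n + 1)).const_mul a
      refine squeeze_zero' ?_ ?_ hub
      · filter_upwards [eventually_gt_atTop (0:ℝ)] with x hx
        have h1 : (0:ℝ) < 1 + a * x := by nlinarith
        have := Real.log_nonneg (show (1:ℝ) ≤ 1 + a * x by nlinarith)
        positivity
      · filter_upwards [eventually_gt_atTop (0:ℝ)] with x hx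
        have h1 : (0:ℝ) < 1 + a * x := by nlinarith
        have hlog : Real.log (1 + a * x) ≤ a * x := by
          have := Real.log_le_sub_one_of_pos h1; linarith
        calc x ^ n * Real.log (1 + a * x) * Real.exp (-x)
            ≤ x ^ n * (a * x) * Real.exp (-x) := by
              apply mul_le_mul_of_nonneg_right _ (Real.exp_nonneg _)
              exact mul_le_mul_of_nonneg_left hlog (by positivity)
          _ = a * (x ^ (n + 1) * Real.exp (-x)) := by ring
    simpa [hF] using hG.neg
  have hFTC := integral_Ioi_of_hasDerivAt_of_tendsto hcont hderiv hint htend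
  have hF0 : F 0 = 0 := by simp [hF]
  rw [hF0, sub_zero] at hFTC
  have hsplit : ∫ x in Ioi (0:ℝ), f' x
      = (∫ x in Ioi (0:ℝ), Real.log (1 + a * x) * x ^ n * Real.exp (-x))
        - ((n : ℝ) * (∫ x in Ioi (0:ℝ), Real.log (1 + a * x) * x ^ (n - 1) * Real.exp (-x))
           + a * (∫ x in Ioi (0:ℝ), x ^ n * Real.exp (-x) / (1 + a * x))) := by
    rw [hf', integral_sub (integrableOn_I ha n) hBC, integral_add hB hC,
      integral_const_mul, integral_const_mul]
  rw [hFTC] at hsplit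
  linarith [hsplit]

/-- The closed-form sequence. -/
noncomputable def ff (a : ℝ) (m : ℕ) : ℝ :=
  (-(1 / a)) ^ m * Ee a
    + ∑ k ∈ Finset.Icc 1 m, ((k - 1).factorial : ℝ) * (-(1 / a)) ^ (m - k)

lemma ff_rec (ha : 0 < a) (m : ℕ) :
    ff a (m + 1) = (m.factorial : ℝ) - ff a m / a := by
  have ha' : a ≠ 0 := ha.ne'
  rw [ff, ff, Finset.sum_Icc_succ_top (Nat.le_add_left 1 m)]
  have hsum : ∑ k ∈ Finset.Icc 1 m, ((k - 1).factorial : ℝ) * (-(1 / a)) ^ (m + 1 - k)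
      = (-(1 / a)) * ∑ k ∈ Finset.Icc 1 m, ((k - 1).factorial : ℝ) * (-(1 / a)) ^ (m - k) := by
    rw [Finset.mul_sum]
    refine Finset.sum_congr rfl fun k hk => ?_
    obtain ⟨hk1, hk2⟩ := Finset.mem_Icc.mp hk
    have : m + 1 - k = (m - k) + 1 := by omega
    rw [this, pow_succ]
    ring
  rw [hsum]
  simp only [Nat.add_sub_cancel, tsub_self, pow_zero, mul_one]
  field_simp
  rw [pow_succ, show a * ((-(1 / a)) ^ m * -(1 / a)) = -(-(1 / a)) ^ m by field_simp]
  ring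

lemma aK_eq_ff (ha : 0 < a) (m : ℕ) :
    a * ∫ x in Ioi (0:ℝ), x ^ m * Real.exp (-x) / (1 + a * x) = ff a m := by
  have ha' : a ≠ 0 := ha.ne'
  induction m with
  | zero => rw [K_zero ha]; simp [ff]
  | succ m ih =>
    rw [K_rec ha m, ff_rec ha m, ← ih]
    field_simp
    simp only [mul_comm]

lemma main_formula (ha : 0 < a) (n : ℕ) :
    ∫ x in Ioi (0:ℝ), Real.log (1 + a * x) * x ^ n * Real.exp (-x)
      = (n.factorial : ℝ) * ∑ m ∈ Finset.range (n + 1), ff a m / (m.factorial : ℝ) := by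
  induction n with
  | zero =>
    have h := IBP ha 0
    simp only [Nat.cast_zero, zero_mul, zero_add] at h
    rw [h, aK_eq_ff ha 0]
    simp
  | succ n ih =>
    have h := IBP ha (n + 1)
    simp only [Nat.add_sub_cancel] at h
    have hfac : ((n + 1).factorial : ℝ) = (n + 1) * n.factorial := by
      rw [Nat.factorial_succ]; push_cast; ring
    have hne : ((n + 1).factorial : ℝ) ≠ 0 := Nat.cast_ne_zero.mpr (Nat.factorial_ne_zero _)
    have hcancel : ((n + 1).factorial : ℝ) * (ff a (n + 1) / ((n + 1).factorial : ℝ))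
        = ff a (n + 1) := mul_div_cancel₀ _ hne
    have hR : ((n + 1).factorial : ℝ) * ∑ m ∈ Finset.range (n + 1 + 1), ff a m / (m.factorial : ℝ)
        = ((n : ℝ) + 1) * ((n.factorial : ℝ) * ∑ m ∈ Finset.range (n + 1), ff a m / (m.factorial : ℝ))
          + ff a (n + 1) := by
      rw [Finset.sum_range_succ, mul_add, hcancel, hfac]
      ring
    rw [h, ih, aK_eq_ff ha (n + 1), hR]
    push_cast
    ring

end GR43375

open GR43375 Set in
/-- Gradshteyn–Ryzhik 4.337.5: closed form of
`∫_0^∞ ln(1+ax) x^n e^{-x} dx` in terms of the exponential integral. -/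
theorem stmt_4 (a : ℝ) (ha : 0 < a) (n : ℕ) :
    ∫ x in Set.Ioi (0 : ℝ), Real.log (1 + a * x) * x ^ n * Real.exp (-x) =
      (Nat.factorial n : ℝ) *
        ∑ μ ∈ Finset.range (n + 1),
          (1 / (Nat.factorial (n - μ) : ℝ)) *
            ((-1 : ℝ) ^ ((n : ℤ) - μ - 1) * a ^ (-((n : ℤ) - μ)) * Real.exp (1 / a) *
                expIntegralEi (-(1 / a)) +
              ∑ k ∈ Finset.Icc 1 (n - μ),
                (Nat.factorial (k - 1) : ℝ) * (-(1 / a)) ^ ((n : ℤ) - μ - k)) := by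
  have ha' : a ≠ 0 := ha.ne'
  have hEi : Real.exp (1 / a) * expIntegralEi (-(1 / a)) = -Ee a := by
    rw [expIntegralEi, Ee]
    simp [mul_neg]
  have key : ∀ m : ℕ,
      (1 / (Nat.factorial m : ℝ)) *
        ((-1 : ℝ) ^ ((m : ℤ) - 1) * a ^ (-(m : ℤ)) * Real.exp (1 / a) *
            expIntegralEi (-(1 / a)) +
          ∑ k ∈ Finset.Icc 1 m,
            (Nat.factorial (k - 1) : ℝ) * (-(1 / a)) ^ ((m : ℤ) - k))
      = ff a m / (Nat.factorial m : ℝ) := by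
    intro m
    have h1 : (-1 : ℝ) ^ ((m : ℤ) - 1) * a ^ (-(m : ℤ)) * Real.exp (1 / a) *
        expIntegralEi (-(1 / a)) = (-(1 / a)) ^ m * Ee a := by
      have hm1 : (-1 : ℝ) ^ ((m : ℤ) - 1) = -(-1 : ℝ) ^ m := by
        rw [zpow_sub₀ (by norm_num : (-1:ℝ) ≠ 0), zpow_natCast, zpow_one]
        field_simp
      have hm2 : a ^ (-(m : ℤ)) = (1 / a) ^ m := by
        rw [zpow_neg, zpow_natCast, one_div, inv_pow]
      rw [hm1, hm2, mul_assoc, hEi, neg_pow]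
      ring
    have h2 : ∀ k ∈ Finset.Icc 1 m,
        (Nat.factorial (k - 1) : ℝ) * (-(1 / a)) ^ ((m : ℤ) - k)
        = (Nat.factorial (k - 1) : ℝ) * (-(1 / a)) ^ (m - k) := by
      intro k hk
      obtain ⟨hk1, hk2⟩ := Finset.mem_Icc.mp hk
      have hc : ((m : ℤ) - k) = ((m - k : ℕ) : ℤ) := by rw [Nat.cast_sub hk2]
      rw [hc, zpow_natCast]
    rw [h1, Finset.sum_congr rfl h2, ff]
    ring
  rw [main_formula ha n]
  congr 1
  rw [show (∑ m ∈ Finset.range (n + 1), ff a m / (Nat.factorial m : ℝ))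
      = ∑ μ ∈ Finset.range (n + 1), ff a (n - μ) / (Nat.factorial (n - μ) : ℝ) from by
    rw [← Finset.sum_range_reflect (fun m => ff a m / (Nat.factorial m : ℝ)) (n + 1)]
    exact Finset.sum_congr rfl fun μ hμ => by
      have : n + 1 - 1 - μ = n - μ := by omega
      rw [this]]
  refine Finset.sum_congr rfl fun μ hμ => ?_
  have hμn : μ ≤ n := Nat.lt_succ_iff.mp (Finset.mem_range.mp hμ)
  have hcast : ((n : ℤ) - μ) = ((n - μ : ℕ) : ℤ) := by rw [Nat.cast_sub hμn]
  rw [show ((n : ℤ) - μ - 1) = ((n - μ : ℕ) : ℤ) - 1 from by rw [hcast],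
    show (-((n : ℤ) - μ)) = -((n - μ : ℕ) : ℤ) from by rw [hcast]]
  rw [show (∑ k ∈ Finset.Icc 1 (n - μ),
      (Nat.factorial (k - 1) : ℝ) * (-(1 / a)) ^ ((n : ℤ) - μ - k))
      = ∑ k ∈ Finset.Icc 1 (n - μ),
      (Nat.factorial (k - 1) : ℝ) * (-(1 / a)) ^ (((n - μ : ℕ) : ℤ) - k) from by
    exact Finset.sum_congr rfl fun k hk => by rw [hcast]]
  exact (key (n - μ)).symm
end
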